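/- (Affine Euler–Poincaré principle, equivalence of the constrained variational principle and the affine Euler–Poincaré equation.) Let l : 𝔤 × V* → ℝ be C¹, dc : 𝔤 → V* linear, ξ : [t₀,t₁] → 𝔤 and a : [t₀,t₁] → V* continuous curves such that t ↦ D₁l(ξ(t),a(t)) ∈ 𝔤* is C¹. Then the following are equivalent: (i) for every C¹ curve η : [t₀,t₁] → 𝔤 with η(t₀) = η(t₁) = 0, ∫_{t₀}^{t₁} [ ⟨D₁l(ξ(t),a(t)), η′(t) + [ξ(t),η(t)]⟩ − ⟨η(t)·a(t) + dc(η(t)), D₂l(ξ(t),a(t))⟩ ] dt = 0; (ii) for all t ∈ [t₀,t₁], (d/dt) D₁l(ξ(t),a(t)) = ad*_{ξ(t)} D₁l(ξ(t),a(t)) + D₂l(ξ(t),a(t)) ⋄ a(t) − dc^T( D₂l(ξ(t),a(t)) ). -/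

import Mathlib

/- Setup: 𝔤 and V are finite-dimensional real (normed) vector spaces; the Lie
bracket of 𝔤 is the bilinear map `br` (antisymmetric, Jacobi) and the
representation of 𝔤 on V is `ρ`. Duals are the continuous duals `g →L[ℝ] ℝ`
and `V →L[ℝ] ℝ`. The dual action is `⟨ξa, v⟩ = −⟨a, ξv⟩`, the diamond
operation `⟨v⋄a, ξ⟩ = −⟨ξa, v⟩`, the coadjoint operator
`⟨ad*_ξ μ, η⟩ = ⟨μ, [ξ,η]⟩`, and `⟨dc^T(v), ξ⟩ = ⟨dc(ξ), v⟩`. The partial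
derivatives `D₁l(ξ,a) ∈ 𝔤*` and `D₂l(ξ,a) ∈ V` (identifying V** ≅ V) of the
C¹ reduced Lagrangian `l` are encoded by the hypothesis `hD`. -/

variable {g V : Type*}
  [NormedAddCommGroup g] [NormedSpace ℝ g] [FiniteDimensional ℝ g]
  [NormedAddCommGroup V] [NormedSpace ℝ V] [FiniteDimensional ℝ V]

/-- The induced action of `𝔤` on the dual `V*`: `⟨ξa, v⟩ = −⟨a, ξv⟩`. -/
def dAct (ρ : g →ₗ[ℝ] V →L[ℝ] V) (ξ : g) (a : V →L[ℝ] ℝ) : V →L[ℝ] ℝ :=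
  -(a.comp (ρ ξ))

/-- The diamond operation `⟨v⋄a, ξ⟩ = −⟨ξa, v⟩ = ⟨a, ξv⟩`. -/
noncomputable def diamond (ρ : g →ₗ[ℝ] V →L[ℝ] V) (v : V) (a : V →L[ℝ] ℝ) :
    g →L[ℝ] ℝ :=
  LinearMap.toContinuousLinearMap
    { toFun := fun ξ => a (ρ ξ v)
      map_add' := by intro x y; simp
      map_smul' := by intro c x; simp }

/-- The coadjoint operator `⟨ad*_ξ μ, η⟩ = ⟨μ, [ξ,η]⟩`. -/
noncomputable def coad (br : g →ₗ[ℝ] g →ₗ[ℝ] g) (ξ : g) (μ : g →L[ℝ] ℝ) :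
    g →L[ℝ] ℝ :=
  μ.comp (LinearMap.toContinuousLinearMap (br ξ))

/-- The transpose `⟨dc^T(v), ξ⟩ = ⟨dc(ξ), v⟩`. -/
noncomputable def dcT (dc : g →ₗ[ℝ] (V →L[ℝ] ℝ)) (v : V) : g →L[ℝ] ℝ :=
  LinearMap.toContinuousLinearMap
    { toFun := fun ξ => dc ξ v
      map_add' := by intro x y; simp
      map_smul' := by intro c x; simp }


open MeasureTheory in
private lemma fund_lemma {t₀ t₁ : ℝ} (ht : t₀ < t₁) (G : ℝ → (g →L[ℝ] ℝ))
    (hG : ContinuousOn G (Set.Icc t₀ t₁))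
    (h : ∀ η : ℝ → g, ContDiffOn ℝ 1 η (Set.Icc t₀ t₁) → η t₀ = 0 → η t₁ = 0 →
      (∫ t in t₀..t₁, G t (η t)) = 0) :
    ∀ t ∈ Set.Icc t₀ t₁, G t = 0 := by
  intro t htI
  ext v
  simp only [ContinuousLinearMap.zero_apply]
  set f : ℝ → ℝ := fun s => G s v with hf
  have hfc : ContinuousOn f (Set.Icc t₀ t₁) := hG.clm_apply continuousOn_const
  have hae : ∀ᵐ x ∂(volume : Measure ℝ), x ∈ Set.Ioo t₀ t₁ → f x = 0 := by
    apply isOpen_Ioo.ae_eq_zero_of_integral_contDiff_smul_eq_zero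
    · exact (hfc.mono Set.Ioo_subset_Icc_self).locallyIntegrableOn measurableSet_Ioo
    · intro φ hφ hφcs hφU
      have hφ0 : φ t₀ = 0 :=
        image_eq_zero_of_notMem_tsupport (fun hmem => lt_irrefl t₀ (hφU hmem).1)
      have hφ1 : φ t₁ = 0 :=
        image_eq_zero_of_notMem_tsupport (fun hmem => lt_irrefl t₁ (hφU hmem).2)
      have h1 : (∫ s in t₀..t₁, G s ((φ s) • v)) = 0 := by
        apply h (fun s => φ s • v)
          ((hφ.of_le (by exact_mod_cast le_top)).smul contDiff_const).contDiffOn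
        · simp [hφ0]
        · simp [hφ1]
      calc ∫ x, φ x • f x ∂(volume : Measure ℝ)
          = ∫ x in Set.Ioo t₀ t₁, φ x • f x := by
            refine (setIntegral_eq_integral_of_forall_compl_eq_zero fun x hx => ?_).symm
            rw [image_eq_zero_of_notMem_tsupport (fun hmem => hx (hφU hmem)), zero_smul]
        _ = ∫ x in Set.Ioc t₀ t₁, φ x • f x := integral_Ioc_eq_integral_Ioo.symm
        _ = ∫ s in t₀..t₁, φ s • f s := (intervalIntegral.integral_of_le ht.le).symm
        _ = ∫ s in t₀..t₁, G s ((φ s) • v) := by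
            refine intervalIntegral.integral_congr fun s _ => ?_
            simp [hf, _root_.map_smul]
        _ = 0 := h1
  have hIoo : ∀ s ∈ Set.Ioo t₀ t₁, f s = 0 := by
    by_contra hcon
    push_neg at hcon
    obtain ⟨s, hs, hs0⟩ := hcon
    have hUopen : IsOpen (Set.Ioo t₀ t₁ ∩ f ⁻¹' {(0:ℝ)}ᶜ) :=
      (hfc.mono Set.Ioo_subset_Icc_self).isOpen_inter_preimage isOpen_Ioo
        isOpen_compl_singleton
    have hpos : 0 < volume (Set.Ioo t₀ t₁ ∩ f ⁻¹' {(0:ℝ)}ᶜ) :=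
      hUopen.measure_pos volume ⟨s, hs, hs0⟩
    have hnull : volume {x | ¬(x ∈ Set.Ioo t₀ t₁ → f x = 0)} = 0 := (ae_iff).1 hae
    refine absurd (measure_mono_null ?_ hnull) (by simpa using hpos.ne')
    intro x hx
    simp only [Set.mem_setOf_eq]
    push_neg
    exact ⟨hx.1, hx.2⟩
  have hne : (nhdsWithin t (Set.Ioo t₀ t₁)).NeBot := by
    rw [← mem_closure_iff_nhdsWithin_neBot, closure_Ioo ht.ne]
    exact htI
  have h1 : Filter.Tendsto f (nhdsWithin t (Set.Ioo t₀ t₁)) (nhds (f t)) :=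
    ((hfc t htI).mono Set.Ioo_subset_Icc_self)
  have h2 : Filter.Tendsto f (nhdsWithin t (Set.Ioo t₀ t₁)) (nhds 0) := by
    refine Filter.Tendsto.congr' ?_ tendsto_const_nhds
    filter_upwards [self_mem_nhdsWithin] with x hx
    exact (hIoo x hx).symm
  exact tendsto_nhds_unique h1 h2

private lemma integrand_eq' (br : g →ₗ[ℝ] g →ₗ[ℝ] g) (ρ : g →ₗ[ℝ] V →L[ℝ] V)
    (dc : g →ₗ[ℝ] (V →L[ℝ] ℝ)) (μ : g →L[ℝ] ℝ) (x : g) (av : V →L[ℝ] ℝ)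
    (d2 : V) (w ηv : g) :
    μ (w + br x ηv) - (dAct ρ ηv av + dc ηv) d2
      = (coad br x μ + diamond ρ d2 av - dcT dc d2) ηv + μ w := by
  simp only [map_add, dAct, diamond, coad, dcT, ContinuousLinearMap.add_apply,
    ContinuousLinearMap.sub_apply, ContinuousLinearMap.neg_apply,
    ContinuousLinearMap.comp_apply, LinearMap.coe_toContinuousLinearMap',
    LinearMap.coe_mk, AddHom.coe_mk]
  ring

private lemma integral_parts {t₀ t₁ : ℝ} (ht : t₀ ≤ t₁)
    (c c' : ℝ → (g →L[ℝ] ℝ)) (u u' : ℝ → g)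
    (hc : ContinuousOn c (Set.Icc t₀ t₁)) (hc' : ContinuousOn c' (Set.Icc t₀ t₁))
    (hu : ContinuousOn u (Set.Icc t₀ t₁)) (hu' : ContinuousOn u' (Set.Icc t₀ t₁))
    (hdc : ∀ t ∈ Set.Icc t₀ t₁, HasDerivWithinAt c (c' t) (Set.Icc t₀ t₁) t)
    (hdu : ∀ t ∈ Set.Icc t₀ t₁, HasDerivWithinAt u (u' t) (Set.Icc t₀ t₁) t) :
    (∫ t in t₀..t₁, ((c' t) (u t) + (c t) (u' t)))
      = (c t₁) (u t₁) - (c t₀) (u t₀) := by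
  apply intervalIntegral.integral_eq_sub_of_hasDeriv_right_of_le ht
  · exact hc.clm_apply hu
  · intro x hx
    have hmem : Set.Icc t₀ t₁ ∈ nhds x := Icc_mem_nhds hx.1 hx.2
    exact (((hdc x (Set.Ioo_subset_Icc_self hx)).hasDerivAt hmem).clm_apply
      ((hdu x (Set.Ioo_subset_Icc_self hx)).hasDerivAt hmem)).hasDerivWithinAt
  · apply ContinuousOn.intervalIntegrable
    rw [Set.uIcc_of_le ht]
    exact (hc'.clm_apply hu).add (hc.clm_apply hu')

private lemma D2_cont (l : g × (V →L[ℝ] ℝ) → ℝ) (hl : ContDiff ℝ 1 l)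
    (D1 : g × (V →L[ℝ] ℝ) → (g →L[ℝ] ℝ)) (D2 : g × (V →L[ℝ] ℝ) → V)
    (hD : ∀ p : g × (V →L[ℝ] ℝ),
      HasFDerivAt l
        ((D1 p).comp (ContinuousLinearMap.fst ℝ g (V →L[ℝ] ℝ)) +
          (ContinuousLinearMap.apply ℝ ℝ (D2 p)).comp
            (ContinuousLinearMap.snd ℝ g (V →L[ℝ] ℝ))) p) :
    Continuous D2 := by
  set ιL : V →ₗ[ℝ] ((V →L[ℝ] ℝ) →L[ℝ] ℝ) :=
    (ContinuousLinearMap.apply ℝ ℝ : V →L[ℝ] ((V →L[ℝ] ℝ) →L[ℝ] ℝ)).toLinearMap with hιL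
  have hker : LinearMap.ker ιL = ⊥ := by
    rw [LinearMap.ker_eq_bot']
    intro v hv
    by_contra hv0
    obtain ⟨f, hf⟩ := SeparatingDual.exists_ne_zero (R := ℝ) hv0
    have h0 : ιL v f = 0 := by rw [hv]; rfl
    exact hf (by simpa [hιL] using h0)
  obtain ⟨σ, hσ⟩ := LinearMap.exists_leftInverse_of_injective (V' := (V →L[ℝ] ℝ) →L[ℝ] ℝ) ιL hker
  have hface : ∀ p, D2 p =
      σ ((fderiv ℝ l p).comp (ContinuousLinearMap.inr ℝ g (V →L[ℝ] ℝ))) := by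
    intro p
    have h1 : (fderiv ℝ l p).comp (ContinuousLinearMap.inr ℝ g (V →L[ℝ] ℝ))
        = ContinuousLinearMap.apply ℝ ℝ (D2 p) := by
      rw [(hD p).fderiv]
      ext b
      simp
    rw [h1]
    have := DFunLike.congr_fun hσ (D2 p)
    simpa [hιL] using this.symm
  have hcont : Continuous fun p =>
      σ ((fderiv ℝ l p).comp (ContinuousLinearMap.inr ℝ g (V →L[ℝ] ℝ))) :=
    (show Continuous σ from LinearMap.continuous_of_finiteDimensional (𝕜 := ℝ) (E := ((V →L[ℝ] ℝ) →L[ℝ] ℝ)) (F' := V) σ).comp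
      ((hl.continuous_fderiv one_ne_zero).clm_comp continuous_const)
  exact (funext hface : D2 = _) ▸ hcont

private noncomputable def brL (br : g →ₗ[ℝ] g →ₗ[ℝ] g) : g →ₗ[ℝ] (g →L[ℝ] g) :=
  { toFun := fun x => LinearMap.toContinuousLinearMap (br x)
    map_add' := by intro x y; ext z; simp
    map_smul' := by intro c x; ext z; simp }

private noncomputable def diaL (ρ : g →ₗ[ℝ] V →L[ℝ] V) :
    V →ₗ[ℝ] ((V →L[ℝ] ℝ) →L[ℝ] (g →L[ℝ] ℝ)) :=
  { toFun := fun v => LinearMap.toContinuousLinearMap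
      { toFun := fun a => diamond ρ v a
        map_add' := by intro a b; ext x; simp [diamond]
        map_smul' := by intro c a; ext x; simp [diamond] }
    map_add' := by intro v w; ext a x; simp [diamond]
    map_smul' := by intro c v; ext a x; simp [diamond] }

private noncomputable def dcTL (dc : g →ₗ[ℝ] (V →L[ℝ] ℝ)) : V →ₗ[ℝ] (g →L[ℝ] ℝ) :=
  { toFun := fun v => dcT dc v
    map_add' := by intro v w; ext x; simp [dcT]
    map_smul' := by intro c v; ext x; simp [dcT] }

private lemma F_contOn {t₀ t₁ : ℝ} (br : g →ₗ[ℝ] g →ₗ[ℝ] g) (ρ : g →ₗ[ℝ] V →L[ℝ] V)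
    (dc : g →ₗ[ℝ] (V →L[ℝ] ℝ)) (ξ : ℝ → g) (a : ℝ → (V →L[ℝ] ℝ))
    (μf : ℝ → (g →L[ℝ] ℝ)) (c2 : ℝ → V)
    (hξ : ContinuousOn ξ (Set.Icc t₀ t₁)) (ha : ContinuousOn a (Set.Icc t₀ t₁))
    (hμ : ContinuousOn μf (Set.Icc t₀ t₁)) (hc2 : ContinuousOn c2 (Set.Icc t₀ t₁)) :
    ContinuousOn
      (fun t => coad br (ξ t) (μf t) + diamond ρ (c2 t) (a t) - dcT dc (c2 t))
      (Set.Icc t₀ t₁) := by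
  have h1 : ContinuousOn (fun t => coad br (ξ t) (μf t)) (Set.Icc t₀ t₁) := by
    have : ContinuousOn (fun t => brL br (ξ t)) (Set.Icc t₀ t₁) :=
      (brL br).continuous_of_finiteDimensional.comp_continuousOn hξ
    exact hμ.clm_comp this
  have h2 : ContinuousOn (fun t => diamond ρ (c2 t) (a t)) (Set.Icc t₀ t₁) := by
    have : ContinuousOn (fun t => diaL ρ (c2 t)) (Set.Icc t₀ t₁) :=
      (show Continuous (diaL ρ) from LinearMap.continuous_of_finiteDimensional (𝕜 := ℝ) (E := V) (F' := (V →L[ℝ] ℝ) →L[ℝ] (g →L[ℝ] ℝ)) (diaL ρ)).comp_continuousOn hc2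
    exact this.clm_apply ha
  have h3 : ContinuousOn (fun t => dcT dc (c2 t)) (Set.Icc t₀ t₁) :=
    (dcTL dc).continuous_of_finiteDimensional.comp_continuousOn hc2
  exact (h1.add h2).sub h3


/-- **Affine Euler–Poincaré principle.** For a C¹ Lagrangian
`l : 𝔤 × V* → ℝ`, a linear map `dc : 𝔤 → V*`, and continuous curves `ξ, a`
such that `t ↦ D₁l(ξ(t),a(t))` is C¹, the constrained variational principle
(i) holds for all variations `δξ = η′ + [ξ,η]`, `δa = −ηa − dc(η)` with `η`
vanishing at the endpoints iff (ii) the affine Euler–Poincaré equation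
`(d/dt) D₁l = ad*_ξ D₁l + D₂l ⋄ a − dc^T(D₂l)` holds on `[t₀,t₁]`. -/
theorem affine_euler_poincare_principle
    (br : g →ₗ[ℝ] g →ₗ[ℝ] g)
    (hbr : ∀ x : g, br x x = 0)
    (hjac : ∀ x y z : g, br x (br y z) + br y (br z x) + br z (br x y) = 0)
    (ρ : g →ₗ[ℝ] V →L[ℝ] V)
    (hρ : ∀ x y : g, ρ (br x y) = (ρ x).comp (ρ y) - (ρ y).comp (ρ x))
    (dc : g →ₗ[ℝ] (V →L[ℝ] ℝ))
    (l : g × (V →L[ℝ] ℝ) → ℝ) (hl : ContDiff ℝ 1 l)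
    (D1 : g × (V →L[ℝ] ℝ) → (g →L[ℝ] ℝ)) (D2 : g × (V →L[ℝ] ℝ) → V)
    (hD : ∀ p : g × (V →L[ℝ] ℝ),
      HasFDerivAt l
        ((D1 p).comp (ContinuousLinearMap.fst ℝ g (V →L[ℝ] ℝ)) +
          (ContinuousLinearMap.apply ℝ ℝ (D2 p)).comp
            (ContinuousLinearMap.snd ℝ g (V →L[ℝ] ℝ))) p)
    (t₀ t₁ : ℝ) (ht : t₀ < t₁)
    (ξ : ℝ → g) (a : ℝ → (V →L[ℝ] ℝ))
    (hξ : ContinuousOn ξ (Set.Icc t₀ t₁)) (ha : ContinuousOn a (Set.Icc t₀ t₁))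
    (hD1 : ContDiffOn ℝ 1 (fun t => D1 (ξ t, a t)) (Set.Icc t₀ t₁)) :
    (∀ η : ℝ → g, ContDiffOn ℝ 1 η (Set.Icc t₀ t₁) → η t₀ = 0 → η t₁ = 0 →
        (∫ t in t₀..t₁,
          ((D1 (ξ t, a t)) (derivWithin η (Set.Icc t₀ t₁) t + br (ξ t) (η t))
            - (dAct ρ (η t) (a t) + dc (η t)) (D2 (ξ t, a t)))) = 0) ↔
      (∀ t ∈ Set.Icc t₀ t₁,
        HasDerivWithinAt (fun s => D1 (ξ s, a s))
          (coad br (ξ t) (D1 (ξ t, a t)) + diamond ρ (D2 (ξ t, a t)) (a t)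
            - dcT dc (D2 (ξ t, a t)))
          (Set.Icc t₀ t₁) t) := by
  have huD : UniqueDiffOn ℝ (Set.Icc t₀ t₁) := uniqueDiffOn_Icc ht
  have hμc : ContinuousOn (fun t => D1 (ξ t, a t)) (Set.Icc t₀ t₁) := hD1.continuousOn
  have hc2c : ContinuousOn (fun t => D2 (ξ t, a t)) (Set.Icc t₀ t₁) :=
    (D2_cont l hl D1 D2 hD).comp_continuousOn (hξ.prodMk ha)
  have hFc : ContinuousOn
      (fun t => coad br (ξ t) (D1 (ξ t, a t)) + diamond ρ (D2 (ξ t, a t)) (a t)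
        - dcT dc (D2 (ξ t, a t))) (Set.Icc t₀ t₁) :=
    F_contOn br ρ dc ξ a _ _ hξ ha hμc hc2c
  have hμd : ∀ t ∈ Set.Icc t₀ t₁, HasDerivWithinAt (fun s => D1 (ξ s, a s))
      (derivWithin (fun s => D1 (ξ s, a s)) (Set.Icc t₀ t₁) t) (Set.Icc t₀ t₁) t :=
    fun t htI => ((hD1.differentiableOn one_ne_zero) t htI).hasDerivWithinAt
  have hμ'c : ContinuousOn (derivWithin (fun s => D1 (ξ s, a s)) (Set.Icc t₀ t₁))
      (Set.Icc t₀ t₁) := hD1.continuousOn_derivWithin huD le_rfl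
  constructor
  · intro hvar t htI
    have key : ∀ s ∈ Set.Icc t₀ t₁,
        (coad br (ξ s) (D1 (ξ s, a s)) + diamond ρ (D2 (ξ s, a s)) (a s)
          - dcT dc (D2 (ξ s, a s)))
          - derivWithin (fun r => D1 (ξ r, a r)) (Set.Icc t₀ t₁) s = 0 := by
      apply fund_lemma ht _ (hFc.sub hμ'c)
      intro η hη hη0 hη1
      have hηc : ContinuousOn η (Set.Icc t₀ t₁) := hη.continuousOn
      have hη'c : ContinuousOn (derivWithin η (Set.Icc t₀ t₁)) (Set.Icc t₀ t₁) :=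
        hη.continuousOn_derivWithin huD le_rfl
      have hηd : ∀ s ∈ Set.Icc t₀ t₁, HasDerivWithinAt η
          (derivWithin η (Set.Icc t₀ t₁) s) (Set.Icc t₀ t₁) s :=
        fun s hs => ((hη.differentiableOn one_ne_zero) s hs).hasDerivWithinAt
      have hparts := integral_parts ht.le (fun s => D1 (ξ s, a s))
        (derivWithin (fun s => D1 (ξ s, a s)) (Set.Icc t₀ t₁)) η
        (derivWithin η (Set.Icc t₀ t₁)) hμc hμ'c hηc hη'c hμd hηd
      rw [hη0, hη1, map_zero, map_zero, sub_zero] at hparts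
      have hrw : ∀ s, (D1 (ξ s, a s)) (derivWithin η (Set.Icc t₀ t₁) s + br (ξ s) (η s))
          - (dAct ρ (η s) (a s) + dc (η s)) (D2 (ξ s, a s))
          = (coad br (ξ s) (D1 (ξ s, a s)) + diamond ρ (D2 (ξ s, a s)) (a s)
              - dcT dc (D2 (ξ s, a s))) (η s)
            + (D1 (ξ s, a s)) (derivWithin η (Set.Icc t₀ t₁) s) :=
        fun s => integrand_eq' br ρ dc _ _ _ _ _ _
      have h0 : (∫ s in t₀..t₁,
          ((coad br (ξ s) (D1 (ξ s, a s)) + diamond ρ (D2 (ξ s, a s)) (a s)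
              - dcT dc (D2 (ξ s, a s))) (η s)
            + (D1 (ξ s, a s)) (derivWithin η (Set.Icc t₀ t₁) s))) = 0 :=
        (intervalIntegral.integral_congr (fun s _ => (hrw s).symm)).trans
          (hvar η hη hη0 hη1)
      have i1 : IntervalIntegrable (fun s => (coad br (ξ s) (D1 (ξ s, a s))
          + diamond ρ (D2 (ξ s, a s)) (a s) - dcT dc (D2 (ξ s, a s))) (η s))
          MeasureTheory.volume t₀ t₁ := by
        apply ContinuousOn.intervalIntegrable
        rw [Set.uIcc_of_le ht.le]
        exact hFc.clm_apply hηc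
      have i2 : IntervalIntegrable
          (fun s => (D1 (ξ s, a s)) (derivWithin η (Set.Icc t₀ t₁) s))
          MeasureTheory.volume t₀ t₁ := by
        apply ContinuousOn.intervalIntegrable
        rw [Set.uIcc_of_le ht.le]
        exact hμc.clm_apply hη'c
      have i3 : IntervalIntegrable
          (fun s => (derivWithin (fun r => D1 (ξ r, a r)) (Set.Icc t₀ t₁) s) (η s))
          MeasureTheory.volume t₀ t₁ := by
        apply ContinuousOn.intervalIntegrable
        rw [Set.uIcc_of_le ht.le]
        exact hμ'c.clm_apply hηc
      have hsum1 : (∫ s in t₀..t₁, (coad br (ξ s) (D1 (ξ s, a s))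
            + diamond ρ (D2 (ξ s, a s)) (a s) - dcT dc (D2 (ξ s, a s))) (η s))
          + (∫ s in t₀..t₁, (D1 (ξ s, a s)) (derivWithin η (Set.Icc t₀ t₁) s)) = 0 := by
        rw [← intervalIntegral.integral_add i1 i2]
        exact h0
      have hsum2 : (∫ s in t₀..t₁,
            (derivWithin (fun r => D1 (ξ r, a r)) (Set.Icc t₀ t₁) s) (η s))
          + (∫ s in t₀..t₁, (D1 (ξ s, a s)) (derivWithin η (Set.Icc t₀ t₁) s)) = 0 := by
        rw [← intervalIntegral.integral_add i3 i2]
        exact hparts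
      have e1 : (∫ s in t₀..t₁,
          ((coad br (ξ s) (D1 (ξ s, a s)) + diamond ρ (D2 (ξ s, a s)) (a s)
            - dcT dc (D2 (ξ s, a s)))
            - derivWithin (fun r => D1 (ξ r, a r)) (Set.Icc t₀ t₁) s) (η s))
          = (∫ s in t₀..t₁, (coad br (ξ s) (D1 (ξ s, a s))
              + diamond ρ (D2 (ξ s, a s)) (a s) - dcT dc (D2 (ξ s, a s))) (η s))
            - ∫ s in t₀..t₁,
              (derivWithin (fun r => D1 (ξ r, a r)) (Set.Icc t₀ t₁) s) (η s) := by
        rw [← intervalIntegral.integral_sub i1 i3]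
        exact intervalIntegral.integral_congr (fun s _ => by simp)
      simp only [Pi.sub_apply]
      rw [e1]
      linarith [hsum1, hsum2]
    have hk := key t htI
    rw [sub_eq_zero] at hk
    have hd := hμd t htI
    rw [← hk] at hd
    exact hd
  · intro heq η hη hη0 hη1
    have hηc : ContinuousOn η (Set.Icc t₀ t₁) := hη.continuousOn
    have hη'c : ContinuousOn (derivWithin η (Set.Icc t₀ t₁)) (Set.Icc t₀ t₁) :=
      hη.continuousOn_derivWithin huD le_rfl
    have hηd : ∀ s ∈ Set.Icc t₀ t₁, HasDerivWithinAt η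
        (derivWithin η (Set.Icc t₀ t₁) s) (Set.Icc t₀ t₁) s :=
      fun s hs => ((hη.differentiableOn one_ne_zero) s hs).hasDerivWithinAt
    have hparts := integral_parts ht.le (fun s => D1 (ξ s, a s))
      (fun s => coad br (ξ s) (D1 (ξ s, a s)) + diamond ρ (D2 (ξ s, a s)) (a s)
        - dcT dc (D2 (ξ s, a s))) η
      (derivWithin η (Set.Icc t₀ t₁)) hμc hFc hηc hη'c heq hηd
    rw [hη0, hη1, map_zero, map_zero, sub_zero] at hparts
    have hrw : ∀ s, (D1 (ξ s, a s)) (derivWithin η (Set.Icc t₀ t₁) s + br (ξ s) (η s))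
        - (dAct ρ (η s) (a s) + dc (η s)) (D2 (ξ s, a s))
        = (coad br (ξ s) (D1 (ξ s, a s)) + diamond ρ (D2 (ξ s, a s)) (a s)
            - dcT dc (D2 (ξ s, a s))) (η s)
          + (D1 (ξ s, a s)) (derivWithin η (Set.Icc t₀ t₁) s) :=
      fun s => integrand_eq' br ρ dc _ _ _ _ _ _
    exact (intervalIntegral.integral_congr (fun s _ => hrw s)).trans hparts
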